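/- arXiv:1801.04425 — 2 statements merged into one kernel-verified Lean document; each statement's English description precedes it below -/
import Mathlib

section
/- Let x be a uniformly random string of length n ≥ 2 over an alphabet of size σ ≥ 2 and let 1 ≤ k ≤ log n / log log n. Define X_{i,j} as the largest ℓ such that both x[i..i+ℓ-1] and x[j..j+ℓ-1] exist and are at Hamming distance at most k. Then for m ≥ k, P(X_{i,j} ≥ m) ≤ C(m,k) · σ^(k-m), for any i ≠ j. -/
open Finset

private lemma card_agree_le (n σ i j m : ℕ) (hij : i < j)
    (hi : i + m ≤ n) (hj : j + m ≤ n) (S : Finset (Fin m)) :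
    (Finset.univ.filter (fun x : Fin n → Fin σ =>
        ∀ t ∈ S, x ⟨i + t, by omega⟩ = x ⟨j + t, by omega⟩)).card
      ≤ σ ^ (n - S.card) := by
  classical
  set F : Finset (Fin n) :=
    S.image (fun t : Fin m => (⟨j + (t : ℕ), by have := t.isLt; omega⟩ : Fin n)) with hFdef
  have hFcard : F.card = S.card := Finset.card_image_of_injective _ (by
    intro a b hab
    have h : j + (a : ℕ) = j + (b : ℕ) := congrArg Fin.val hab
    exact Fin.ext (by omega))
  have key : ∀ x y : Fin n → Fin σ,
      (∀ t ∈ S, x ⟨i + t, by omega⟩ = x ⟨j + t, by omega⟩) →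
      (∀ t ∈ S, y ⟨i + t, by omega⟩ = y ⟨j + t, by omega⟩) →
      (∀ c : Fin n, c ∉ F → x c = y c) → x = y := by
    intro x y hx hy hout
    funext c
    have main : ∀ N, ∀ c : Fin n, (c : ℕ) < N → x c = y c := by
      intro N
      induction N with
      | zero => intro c hc; omega
      | succ N ih =>
        intro c hc
        by_cases hcF : c ∈ F
        · rw [hFdef] at hcF
          obtain ⟨t, htS, htc⟩ := Finset.mem_image.mp hcF
          have htm := t.isLt
          have hval : (c : ℕ) = j + (t : ℕ) := (congrArg Fin.val htc).symm
          have h1 := hx t htS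
          have h2 := hy t htS
          rw [← htc, ← h1, ← h2]
          exact ih ⟨i + (t : ℕ), by omega⟩ (show i + (t : ℕ) < N by omega)
        · exact hout c hcF
    exact main ((c : ℕ) + 1) c (Nat.lt_succ_self _)
  have hinj := Finset.card_le_card_of_injOn
    (s := Finset.univ.filter (fun x : Fin n → Fin σ =>
        ∀ t ∈ S, x ⟨i + t, by omega⟩ = x ⟨j + t, by omega⟩))
    (t := (Finset.univ : Finset ({c : Fin n // c ∈ Fᶜ} → Fin σ)))
    (f := fun (x : Fin n → Fin σ) (c : {c : Fin n // c ∈ Fᶜ}) => x c.1)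
    (fun a _ => Finset.mem_univ _)
    (by
      intro x hx y hy hxy
      rw [Finset.mem_coe, Finset.mem_filter] at hx hy
      refine key x y hx.2 hy.2 ?_
      intro c hc
      exact congrFun hxy ⟨c, Finset.mem_compl.mpr hc⟩)
  refine le_trans hinj (le_of_eq ?_)
  rw [Finset.card_univ, Fintype.card_fun, Fintype.card_fin, Fintype.card_coe,
    Finset.card_compl, Fintype.card_fin, hFcard]

set_option maxHeartbeats 1000000 in
private lemma count_le (n σ k m i j : ℕ) (hkm : k ≤ m) (hij : i < j)
    (hi : i + m ≤ n) (hj : j + m ≤ n) :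
    (Finset.univ.filter (fun x : Fin n → Fin σ =>
        (Finset.univ.filter (fun t : Fin m =>
          x ⟨i + t, by omega⟩ ≠ x ⟨j + t, by omega⟩)).card ≤ k)).card
      ≤ m.choose k * σ ^ (n - (m - k)) := by
  classical
  have hsub : (Finset.univ.filter (fun x : Fin n → Fin σ =>
        (Finset.univ.filter (fun t : Fin m =>
          x ⟨i + t, by omega⟩ ≠ x ⟨j + t, by omega⟩)).card ≤ k))
      ⊆ ((Finset.univ : Finset (Fin m)).powersetCard (m - k)).biUnion
        (fun S => Finset.univ.filter (fun x : Fin n → Fin σ =>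
          ∀ t ∈ S, x ⟨i + t, by omega⟩ = x ⟨j + t, by omega⟩)) := by
    intro x hx
    rw [Finset.mem_filter] at hx
    have hunion : ((Finset.univ.filter (fun t : Fin m =>
          x ⟨i + t, by omega⟩ = x ⟨j + t, by omega⟩))
        ∪ (Finset.univ.filter (fun t : Fin m =>
          x ⟨i + t, by omega⟩ ≠ x ⟨j + t, by omega⟩))) = Finset.univ := by
      ext t
      simp only [Finset.mem_union, Finset.mem_filter, Finset.mem_univ, true_and, true_iff]
      exact iff_true_intro (em _)
    have hsum := Finset.card_union_le
      (Finset.univ.filter (fun t : Fin m =>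
        x ⟨i + t, by omega⟩ = x ⟨j + t, by omega⟩))
      (Finset.univ.filter (fun t : Fin m =>
        x ⟨i + t, by omega⟩ ≠ x ⟨j + t, by omega⟩))
    rw [hunion, Finset.card_univ, Fintype.card_fin] at hsum
    have hT : m - k ≤ ((Finset.univ : Finset (Fin m)).filter (fun t : Fin m =>
        x ⟨i + t, by omega⟩ = x ⟨j + t, by omega⟩)).card := by omega
    obtain ⟨S, hST, hScard⟩ := Finset.exists_subset_card_eq hT
    refine Finset.mem_biUnion.mpr ⟨S, ?_, ?_⟩
    · exact Finset.mem_powersetCard_univ.mpr hScard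
    · rw [Finset.mem_filter]
      exact ⟨Finset.mem_univ _, fun t ht => (Finset.mem_filter.mp (hST ht)).2⟩
  have h2 : ∀ S ∈ ((Finset.univ : Finset (Fin m)).powersetCard (m - k)),
      (Finset.univ.filter (fun x : Fin n → Fin σ =>
        ∀ t ∈ S, x ⟨i + t, by omega⟩ = x ⟨j + t, by omega⟩)).card
      ≤ σ ^ (n - (m - k)) := by
    intro S hS
    have hScard : S.card = m - k := Finset.mem_powersetCard_univ.mp hS
    have h := card_agree_le n σ i j m hij hi hj S
    rw [hScard] at h
    exact h
  refine le_trans (Finset.card_le_card hsub) (le_trans Finset.card_biUnion_le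
    (le_trans (Finset.sum_le_sum h2) (le_of_eq ?_)))
  rw [Finset.sum_const, smul_eq_mul, Finset.card_powersetCard,
    Finset.card_univ, Fintype.card_fin, Nat.choose_symm hkm]

theorem suffix_lcp_k_tail_bound (n σ k m i j : ℕ) (hσ : 2 ≤ σ) (hn : 2 ≤ n)
    (hk1 : 1 ≤ k) (hk : (k : ℝ) ≤ Real.log n / Real.log (Real.log n))
    (hkm : k ≤ m) (hij : i ≠ j) (hi : i + m ≤ n) (hj : j + m ≤ n) :
    ((Finset.univ.filter
        (fun x : Fin n → Fin σ =>
          (Finset.univ.filter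
            (fun t : Fin m =>
              x ⟨i + t, by omega⟩ ≠ x ⟨j + t, by omega⟩)).card ≤ k)).card : ℝ)
      / (Fintype.card (Fin n → Fin σ) : ℝ)
    ≤ (m.choose k : ℝ) * (σ : ℝ) ^ ((k : ℤ) - (m : ℤ)) := by
  classical
  have hm : m ≤ n := by omega
  have hσ0 : (0 : ℝ) < (σ : ℝ) := by positivity
  have hσn : (0 : ℝ) < (σ : ℝ) ^ n := by positivity
  have hcard : (Fintype.card (Fin n → Fin σ) : ℝ) = (σ : ℝ) ^ n := by
    rw [Fintype.card_fun, Fintype.card_fin, Fintype.card_fin]; push_cast; ring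
  have harith : ((k : ℤ) - (m : ℤ) + (n : ℤ)) = ((n - (m - k) : ℕ) : ℤ) := by omega
  have hz : (σ : ℝ) ^ ((k : ℤ) - (m : ℤ)) * (σ : ℝ) ^ n
      = (σ : ℝ) ^ (n - (m - k)) := by
    rw [← zpow_natCast (σ : ℝ) n, ← zpow_add₀ (ne_of_gt hσ0), harith, zpow_natCast]
  have hcount : (Finset.univ.filter
        (fun x : Fin n → Fin σ =>
          (Finset.univ.filter
            (fun t : Fin m =>
              x ⟨i + t, by omega⟩ ≠ x ⟨j + t, by omega⟩)).card ≤ k)).card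
      ≤ m.choose k * σ ^ (n - (m - k)) := by
    rcases Nat.lt_or_ge i j with h | h
    · exact count_le n σ k m i j hkm h hi hj
    · have h' : j < i := by omega
      have hEq : (Finset.univ.filter
          (fun x : Fin n → Fin σ =>
            (Finset.univ.filter
              (fun t : Fin m =>
                x ⟨i + t, by omega⟩ ≠ x ⟨j + t, by omega⟩)).card ≤ k))
        = (Finset.univ.filter
          (fun x : Fin n → Fin σ =>
            (Finset.univ.filter
              (fun t : Fin m =>
                x ⟨j + t, by omega⟩ ≠ x ⟨i + t, by omega⟩)).card ≤ k)) := by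
        apply Finset.filter_congr
        intro x _
        have hset : (Finset.univ.filter (fun t : Fin m =>
            x ⟨i + t, by omega⟩ ≠ x ⟨j + t, by omega⟩))
          = (Finset.univ.filter (fun t : Fin m =>
            x ⟨j + t, by omega⟩ ≠ x ⟨i + t, by omega⟩)) := by
          apply Finset.filter_congr
          intro t _
          exact ⟨Ne.symm, Ne.symm⟩
        rw [hset]
      rw [hEq]
      exact count_le n σ k m j i hkm h' hj hi
  have goal_eq : (m.choose k : ℝ) * (σ : ℝ) ^ ((k : ℤ) - (m : ℤ)) * (σ : ℝ) ^ n
      = ((m.choose k * σ ^ (n - (m - k)) : ℕ) : ℝ) := by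
    push_cast
    rw [mul_assoc, hz]
  rw [hcard, div_le_iff₀ hσn, goal_eq]
  exact_mod_cast hcount
end

section
/- Let x be a uniformly random string of length n over an alphabet of size σ ≥ 2 with i.i.d. uniform letters, and 1 ≤ k ≤ log n / log log n. Let Y be the maximum over pairs of distinct suffixes of x of the length of their longest common prefix with at most k Hamming errors. Then there exists a constant α (depending only on σ) such that E[Y] ≤ α (log_σ n + k) + O(1); in particular E[Y] = O(log_σ n). -/
/-- Extension of a finite string to all of `ℕ` (padding with `0`). -/
def extStr {n σ : ℕ} [NeZero σ] (x : Fin n → Fin σ) : ℕ → Fin σ :=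
  fun t => if h : t < n then x ⟨t, h⟩ else 0

/-- The longest common prefix with at most `k` Hamming errors of the suffixes of `x`
starting at positions `i` and `j`: the largest `ℓ` such that both windows
`x[i..i+ℓ-1]` and `x[j..j+ℓ-1]` exist and are at Hamming distance at most `k`. -/
def lcpK (n σ k : ℕ) [NeZero σ] (x : Fin n → Fin σ) (i j : ℕ) : ℕ :=
  Nat.findGreatest
    (fun ℓ => i + ℓ ≤ n ∧ j + ℓ ≤ n ∧
      ((Finset.range ℓ).filter (fun t => extStr x (i + t) ≠ extStr x (j + t))).card ≤ k) n

/-- The maximal longest common prefix with `k` errors over all pairs of distinct suffixes. -/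
def maxLcpK (n σ k : ℕ) [NeZero σ] (x : Fin n → Fin σ) : ℕ :=
  (((Finset.range n) ×ˢ (Finset.range n)).filter (fun p => p.1 < p.2)).sup
    (fun p => lcpK n σ k x p.1 p.2)


section lemmas
variable {n σ k : ℕ} [NeZero σ]

lemma maxLcpK_le_n (x : Fin n → Fin σ) : maxLcpK n σ k x ≤ n := by
  apply Finset.sup_le
  intro p _
  exact Nat.findGreatest_le n

lemma lcpK_down (x : Fin n → Fin σ) {i j m : ℕ} (hi : i ≤ n) (hj : j ≤ n)
    (hm : m ≤ lcpK n σ k x i j) :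
    i + m ≤ n ∧ j + m ≤ n ∧
      ((Finset.range m).filter (fun t => extStr x (i + t) ≠ extStr x (j + t))).card ≤ k := by
  unfold lcpK at hm
  have hspec := Nat.findGreatest_spec (m := 0) (n := n)
    (P := fun ℓ => i + ℓ ≤ n ∧ j + ℓ ≤ n ∧
      ((Finset.range ℓ).filter (fun t => extStr x (i + t) ≠ extStr x (j + t))).card ≤ k)
    (Nat.zero_le n) ⟨by omega, by omega, by simp⟩
  obtain ⟨h1, h2, h3⟩ := hspec
  refine ⟨by omega, by omega, le_trans (Finset.card_le_card ?_) h3⟩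
  exact Finset.filter_subset_filter _ (Finset.range_subset_range.2 hm)

/-- counting strings with prescribed equalities -/
lemma card_good_le (i j m : ℕ) (hij : i < j) (hjm : j + m ≤ n) (T : Finset ℕ)
    (hT : T ⊆ Finset.range m) :
    (Finset.univ.filter (fun x : Fin n → Fin σ =>
        ∀ t ∈ T, extStr x (i + t) = extStr x (j + t))).card ≤ σ ^ (n - T.card) := by
  classical
  set J : Finset ℕ := T.image (fun t => j + t) with hJ
  have hJcard : J.card = T.card := Finset.card_image_of_injective _ (fun a b h => by omega)
  have hJsub : J ⊆ Finset.range n := by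
    intro p hp
    obtain ⟨t, ht, rfl⟩ := Finset.mem_image.1 hp
    exact Finset.mem_range.2 (by have := Finset.mem_range.1 (hT ht); omega)
  set D : Finset ℕ := Finset.range n \ J with hD
  have hDcard : D.card = n - T.card := by
    rw [hD, Finset.card_sdiff_of_subset hJsub, Finset.card_range, hJcard]
  have hle : (Finset.univ.filter (fun x : Fin n → Fin σ =>
      ∀ t ∈ T, extStr x (i + t) = extStr x (j + t))).card
      ≤ (Finset.univ : Finset ({p // p ∈ D} → Fin σ)).card := by
    apply Finset.card_le_card_of_injOn
      (fun x => fun p => x ⟨p.1, Finset.mem_range.1 (Finset.mem_sdiff.1 p.2).1⟩)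
    · intro x _; exact Finset.mem_univ _
    · intro x hx y hy hxy
      simp only [Finset.mem_coe, Finset.mem_filter] at hx hy
      have main : ∀ N : ℕ, ∀ h : N < n, x ⟨N, h⟩ = y ⟨N, h⟩ := by
        intro N
        induction N using Nat.strong_induction_on with
        | _ N ih =>
          intro h
          by_cases hmem : N ∈ J
          · obtain ⟨t, ht, rfl⟩ := Finset.mem_image.1 hmem
            have htm : t < m := Finset.mem_range.1 (hT ht)
            have hitn : i + t < n := by omega
            have ex := hx.2 t ht
            have ey := hy.2 t ht
            have ihx : x ⟨i + t, hitn⟩ = y ⟨i + t, hitn⟩ := ih (i + t) (by omega) hitn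
            have e1 : extStr x (i + t) = x ⟨i + t, hitn⟩ := dif_pos hitn
            have e2 : extStr x (j + t) = x ⟨j + t, h⟩ := dif_pos h
            have e3 : extStr y (i + t) = y ⟨i + t, hitn⟩ := dif_pos hitn
            have e4 : extStr y (j + t) = y ⟨j + t, h⟩ := dif_pos h
            rw [← e2, ← ex, e1, ihx, ← e3, ey, e4]
          · have hpD : N ∈ D := Finset.mem_sdiff.2 ⟨Finset.mem_range.2 h, hmem⟩
            exact congrFun hxy ⟨N, hpD⟩
      funext p
      obtain ⟨v, hv⟩ := p
      exact main v hv
  calc _ ≤ (Finset.univ : Finset ({p // p ∈ D} → Fin σ)).card := hle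
    _ = σ ^ (n - T.card) := by
      rw [Finset.card_univ, Fintype.card_fun, Fintype.card_coe, Fintype.card_fin, hDcard]

lemma card_lcp_ge_le (i j m : ℕ) (hij : i < j) (hjn : j < n) (hkm : k ≤ m) :
    (Finset.univ.filter (fun x : Fin n → Fin σ => m ≤ lcpK n σ k x i j)).card
      ≤ m.choose k * σ ^ (n - (m - k)) := by
  classical
  by_cases hjm : j + m ≤ n
  · have hsub : (Finset.univ.filter (fun x : Fin n → Fin σ => m ≤ lcpK n σ k x i j))
        ⊆ (Finset.powersetCard k (Finset.range m)).biUnion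
          (fun S => Finset.univ.filter (fun x : Fin n → Fin σ =>
            ∀ t ∈ Finset.range m \ S, extStr x (i + t) = extStr x (j + t))) := by
      intro x hx
      simp only [Finset.mem_filter, Finset.mem_univ, true_and] at hx
      obtain ⟨h1, h2, h3⟩ := lcpK_down x (by omega) (by omega) hx
      obtain ⟨S, hMS, hSsub, hScard⟩ := Finset.exists_subsuperset_card_eq
        (Finset.filter_subset (fun t => extStr x (i + t) ≠ extStr x (j + t)) (Finset.range m))
        h3 (by rw [Finset.card_range]; exact hkm)
      refine Finset.mem_biUnion.2 ⟨S, Finset.mem_powersetCard.2 ⟨hSsub, hScard⟩, ?_⟩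
      simp only [Finset.mem_filter, Finset.mem_univ, true_and]
      intro t ht
      rw [Finset.mem_sdiff] at ht
      by_contra hne
      exact ht.2 (hMS (Finset.mem_filter.2 ⟨ht.1, hne⟩))
    calc _ ≤ _ := Finset.card_le_card hsub
      _ ≤ ∑ S ∈ Finset.powersetCard k (Finset.range m),
            (Finset.univ.filter (fun x : Fin n → Fin σ =>
              ∀ t ∈ Finset.range m \ S, extStr x (i + t) = extStr x (j + t))).card :=
        Finset.card_biUnion_le
      _ ≤ ∑ S ∈ Finset.powersetCard k (Finset.range m), σ ^ (n - (m - k)) := by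
        apply Finset.sum_le_sum
        intro S hS
        obtain ⟨hSsub, hScard⟩ := Finset.mem_powersetCard.1 hS
        have hcard : (Finset.range m \ S).card = m - k := by
          rw [Finset.card_sdiff_of_subset hSsub, Finset.card_range, hScard]
        have := card_good_le (n := n) (σ := σ) i j m hij hjm (Finset.range m \ S)
          Finset.sdiff_subset
        rwa [hcard] at this
      _ = m.choose k * σ ^ (n - (m - k)) := by
        rw [Finset.sum_const, Finset.card_powersetCard, Finset.card_range, smul_eq_mul]
  · have : (Finset.univ.filter (fun x : Fin n → Fin σ => m ≤ lcpK n σ k x i j)) = ∅ := by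
      apply Finset.eq_empty_of_forall_notMem
      intro x hx
      simp only [Finset.mem_filter, Finset.mem_univ, true_and] at hx
      obtain ⟨h1, h2, h3⟩ := lcpK_down x (by omega) (by omega) hx
      omega
    rw [this]
    simp

lemma card_max_ge_le (m : ℕ) (hm : 1 ≤ m) (hkm : k ≤ m) :
    (Finset.univ.filter (fun x : Fin n → Fin σ => m ≤ maxLcpK n σ k x)).card
      ≤ n ^ 2 * (m.choose k * σ ^ (n - (m - k))) := by
  classical
  set P := ((Finset.range n ×ˢ Finset.range n).filter fun p => p.1 < p.2) with hP
  have hsub : (Finset.univ.filter (fun x : Fin n → Fin σ => m ≤ maxLcpK n σ k x))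
      ⊆ P.biUnion (fun p => Finset.univ.filter
          (fun x : Fin n → Fin σ => m ≤ lcpK n σ k x p.1 p.2)) := by
    intro x hx
    simp only [Finset.mem_filter, Finset.mem_univ, true_and] at hx
    obtain ⟨p, hp, hple⟩ := (Finset.le_sup_iff (show (⊥ : ℕ) < m from hm)).1 hx
    exact Finset.mem_biUnion.2 ⟨p, hp, Finset.mem_filter.2 ⟨Finset.mem_univ _, hple⟩⟩
  calc _ ≤ _ := Finset.card_le_card hsub
    _ ≤ ∑ p ∈ P, (Finset.univ.filter
          (fun x : Fin n → Fin σ => m ≤ lcpK n σ k x p.1 p.2)).card :=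
      Finset.card_biUnion_le
    _ ≤ ∑ _p ∈ P, m.choose k * σ ^ (n - (m - k)) := by
      apply Finset.sum_le_sum
      intro p hp
      rw [hP, Finset.mem_filter, Finset.mem_product, Finset.mem_range, Finset.mem_range] at hp
      exact card_lcp_ge_le p.1 p.2 m hp.2 hp.1.2 hkm
    _ = P.card * (m.choose k * σ ^ (n - (m - k))) := by
      rw [Finset.sum_const, smul_eq_mul]
    _ ≤ n ^ 2 * (m.choose k * σ ^ (n - (m - k))) := by
      apply Nat.mul_le_mul_right
      calc P.card ≤ (Finset.range n ×ˢ Finset.range n).card :=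
            Finset.card_le_card (Finset.filter_subset _ _)
        _ = n ^ 2 := by rw [Finset.card_product, Finset.card_range, sq]

lemma choose_le_two_pow (a b : ℕ) : a.choose b ≤ 2 ^ a := by
  rcases le_or_gt b a with h | h
  · calc a.choose b ≤ ∑ m ∈ Finset.range (a+1), a.choose m :=
        Finset.single_le_sum (fun _ _ => Nat.zero_le _) (Finset.mem_range.2 (by omega))
    _ = 2 ^ a := Nat.sum_range_choose a
  · simp [Nat.choose_eq_zero_of_lt h]

lemma choose_bound (m : ℕ) (hk : 1 ≤ k) (hm : 6 * k ≤ m) :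
    m.choose k * 2 ^ (m - 6 * k) ≤ 2 ^ (6 * k) * 3 ^ (m - 6 * k) := by
  induction m, hm using Nat.le_induction with
  | base => simpa using choose_le_two_pow (6 * k) k
  | succ m hm6 ih =>
    have key : 2 * (m + 1).choose k ≤ 3 * m.choose k := by
      obtain ⟨k', rfl⟩ : ∃ k', k = k' + 1 := ⟨k - 1, by omega⟩
      have hsucc : (m + 1).choose (k' + 1) = m.choose k' + m.choose (k' + 1) :=
        Nat.choose_succ_succ m k'
      have hid : m.choose (k' + 1) * (k' + 1) = m.choose k' * (m - k') :=
        Nat.choose_succ_right_eq m k'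
      have h2 : 2 * m.choose k' ≤ m.choose (k' + 1) := by
      -- 2 * C(m,k') * (k'+1) ≤ C(m,k') * (m-k') = C(m,k'+1)*(k'+1)
        have hd : 2 * (k' + 1) ≤ m - k' := by omega
        have hmul : 2 * m.choose k' * (k' + 1) ≤ m.choose (k' + 1) * (k' + 1) := by
          calc 2 * m.choose k' * (k' + 1) = m.choose k' * (2 * (k' + 1)) := by ring
            _ ≤ m.choose k' * (m - k') := Nat.mul_le_mul_left _ hd
            _ = m.choose (k' + 1) * (k' + 1) := hid.symm
        exact Nat.le_of_mul_le_mul_right hmul (by omega)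
      omega
    have hsub : m + 1 - 6 * k = (m - 6 * k) + 1 := by omega
    rw [hsub, pow_succ, pow_succ]
    calc (m + 1).choose k * (2 ^ (m - 6 * k) * 2)
        = (2 * (m + 1).choose k) * 2 ^ (m - 6 * k) := by ring
      _ ≤ (3 * m.choose k) * 2 ^ (m - 6 * k) := Nat.mul_le_mul_right _ key
      _ = 3 * (m.choose k * 2 ^ (m - 6 * k)) := by ring
      _ ≤ 3 * (2 ^ (6 * k) * 3 ^ (m - 6 * k)) := Nat.mul_le_mul_left _ ih
      _ = 2 ^ (6 * k) * (3 ^ (m - 6 * k) * 3) := by ring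

lemma term_bound (σ k a : ℕ) (hσ : 2 ≤ σ) (hk : 1 ≤ k) :
    (((6 * k + a).choose k : ℝ)) / (σ : ℝ) ^ (5 * k + a)
      ≤ ((64 * σ : ℕ) : ℝ) ^ k * (3 / 4 : ℝ) ^ (6 * k + a) := by
  have hσ0 : (0 : ℝ) < (σ : ℝ) := by positivity
  have hσ2 : (2 : ℝ) ≤ (σ : ℝ) := by exact_mod_cast hσ
  have hcb := choose_bound (k := k) (6 * k + a) hk (by omega)
  have ha : 6 * k + a - 6 * k = a := by omega
  rw [ha] at hcb
  have hcb' : ((6 * k + a).choose k : ℝ) ≤ 2 ^ (6 * k) * 3 ^ a / 2 ^ a := by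
    rw [le_div_iff₀ (by positivity)]
    exact_mod_cast hcb
  calc ((6 * k + a).choose k : ℝ) / (σ : ℝ) ^ (5 * k + a)
      ≤ (2 ^ (6 * k) * 3 ^ a / 2 ^ a) / (σ : ℝ) ^ (5 * k + a) := by gcongr
    _ = (2 ^ (6 * k) / (σ : ℝ) ^ (5 * k)) * ((3 / 2 : ℝ) ^ a / (σ : ℝ) ^ a) := by
        rw [pow_add, div_pow]; ring
    _ ≤ (2 ^ (6 * k) / (2 : ℝ) ^ (5 * k)) * ((3 / 2 : ℝ) ^ a / (2 : ℝ) ^ a) := by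
        gcongr <;> positivity
    _ = 2 ^ k * (3 / 4 : ℝ) ^ a := by
        have e1 : (2:ℝ) ^ (6 * k) / 2 ^ (5 * k) = 2 ^ k := by
          rw [show 6 * k = 5 * k + k by ring, pow_add]
          field_simp
        have e2 : ((3 / 2 : ℝ)) ^ a / 2 ^ a = (3 / 4 : ℝ) ^ a := by
          rw [← div_pow]; norm_num
        rw [e1, e2]
    _ ≤ (64 * (3 / 4 : ℝ) ^ 6 * σ) ^ k * (3 / 4 : ℝ) ^ a := by
        have hb : (2:ℝ) ≤ 64 * (3 / 4 : ℝ) ^ 6 * σ := by nlinarith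
        exact mul_le_mul_of_nonneg_right
          (pow_le_pow_left₀ (by norm_num : (0:ℝ) ≤ 2) hb k) (by positivity)
    _ = ((64 * σ : ℕ) : ℝ) ^ k * (3 / 4 : ℝ) ^ (6 * k) * (3 / 4 : ℝ) ^ a := by
        push_cast
        rw [mul_pow, mul_pow, ← pow_mul]
        ring
    _ = ((64 * σ : ℕ) : ℝ) ^ k * (3 / 4 : ℝ) ^ (6 * k + a) := by
        rw [pow_add]; ring

lemma geom_tail (B N : ℕ) : ∑ m ∈ Finset.Icc B N, (3 / 4 : ℝ) ^ m ≤ 4 * (3 / 4 : ℝ) ^ B := by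
  rw [← Finset.Ico_add_one_right_eq_Icc, Finset.sum_Ico_eq_sum_range]
  have : ∀ m ∈ Finset.range (N + 1 - B), (3 / 4 : ℝ) ^ (B + m) = (3/4:ℝ)^B * (3/4:ℝ)^m :=
    fun m _ => pow_add _ _ _
  rw [Finset.sum_congr rfl this, ← Finset.mul_sum]
  have hg : ∑ m ∈ Finset.range (N + 1 - B), (3 / 4 : ℝ) ^ m ≤ 4 := by
    rw [geom_sum_eq (by norm_num)]
    have h1 : (0:ℝ) ≤ (3/4:ℝ) ^ (N + 1 - B) := by positivity
    have h2 : ((3:ℝ)/4) ^ (N + 1 - B) ≤ 1 := pow_le_one₀ (by norm_num) (by norm_num)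
    rw [div_le_iff_of_neg (by norm_num)]
    linarith
  calc (3/4:ℝ)^B * ∑ m ∈ Finset.range (N + 1 - B), (3 / 4 : ℝ) ^ m
      ≤ (3/4:ℝ)^B * 4 := by gcongr
    _ = 4 * (3/4:ℝ)^B := by ring

end lemmas


lemma per_term (n σ k m : ℕ) [NeZero σ] (hσ : 2 ≤ σ) (hk : 1 ≤ k) (hm1 : 1 ≤ m)
    (hmn : m ≤ n) (h6k : 6 * k ≤ m) :
    ((Finset.univ.filter (fun x : Fin n → Fin σ => m ≤ maxLcpK n σ k x)).card : ℝ)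
      / (σ : ℝ) ^ n ≤ (n : ℝ) ^ 2 * ((64 * σ : ℕ) : ℝ) ^ k * (3 / 4 : ℝ) ^ m := by
  have hσ0 : (0 : ℝ) < (σ : ℝ) := by positivity
  have hσn : (0 : ℝ) < (σ : ℝ) ^ n := by positivity
  have hcm := card_max_ge_le (n := n) (σ := σ) (k := k) m hm1 (by omega)
  have hpow : ((σ : ℝ)) ^ (n - (m - k)) * (σ : ℝ) ^ (m - k) = (σ : ℝ) ^ n := by
    rw [← pow_add]; congr 1; omega
  have hstep1 : ((Finset.univ.filter
        (fun x : Fin n → Fin σ => m ≤ maxLcpK n σ k x)).card : ℝ) / (σ : ℝ) ^ n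
      ≤ (n : ℝ) ^ 2 * ((m.choose k : ℝ) / (σ : ℝ) ^ (m - k)) := by
    rw [div_le_iff₀ hσn, ← hpow]
    calc ((Finset.univ.filter
          (fun x : Fin n → Fin σ => m ≤ maxLcpK n σ k x)).card : ℝ)
        ≤ (n : ℝ) ^ 2 * ((m.choose k : ℝ) * (σ : ℝ) ^ (n - (m - k))) := by
          exact_mod_cast hcm
      _ = (n : ℝ) ^ 2 * ((m.choose k : ℝ) / (σ : ℝ) ^ (m - k))
          * ((σ : ℝ) ^ (n - (m - k)) * (σ : ℝ) ^ (m - k)) := by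
          field_simp
  obtain ⟨a, rfl⟩ : ∃ a, m = 6 * k + a := ⟨m - 6 * k, by omega⟩
  have hmk : 6 * k + a - k = 5 * k + a := by omega
  have htb := term_bound σ k a hσ hk
  rw [hmk] at hstep1
  calc _ ≤ (n : ℝ) ^ 2 * (((6 * k + a).choose k : ℝ) / (σ : ℝ) ^ (5 * k + a)) := hstep1
    _ ≤ (n : ℝ) ^ 2 * (((64 * σ : ℕ) : ℝ) ^ k * (3 / 4 : ℝ) ^ (6 * k + a)) := by gcongr
    _ = (n : ℝ) ^ 2 * ((64 * σ : ℕ) : ℝ) ^ k * (3 / 4 : ℝ) ^ (6 * k + a) := by ring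

set_option maxHeartbeats 1000000 in
theorem expected_max_lcp_k (σ : ℕ) [NeZero σ] (hσ : 2 ≤ σ) :
    ∃ α A : ℝ, 0 < α ∧ 0 ≤ A ∧
      ∀ n k : ℕ, 2 ≤ n → 1 ≤ k → (k : ℝ) ≤ Real.log n / Real.log (Real.log n) →
        (∑ x : Fin n → Fin σ, (maxLcpK n σ k x : ℝ))
            / (Fintype.card (Fin n → Fin σ) : ℝ)
          ≤ α * (Real.logb σ n + k) + A := by
  classical
  have hσ0 : (0 : ℝ) < (σ : ℝ) := by positivity
  have hσ2 : (2 : ℝ) ≤ (σ : ℝ) := by exact_mod_cast hσ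
  have hσ1 : (1 : ℝ) < (σ : ℝ) := by linarith
  have hlogσ : 0 < Real.log σ := Real.log_pos hσ1
  set L : ℝ := Real.log (4 / 3) with hL
  have hL0 : 0 < L := Real.log_pos (by norm_num)
  set c : ℝ := 2 * Real.log σ + Real.log (64 * σ) with hc
  have hlog64σ : 0 < Real.log (64 * σ) := Real.log_pos (by push_cast; nlinarith)
  have hc0 : 0 < c := by positivity
  refine ⟨6 + c / L, 4, by positivity, by norm_num, ?_⟩
  intro n k hn hk _
  set α : ℝ := 6 + c / L with hα
  have hα6 : (6 : ℝ) ≤ α := by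
    have h0 : 0 ≤ c / L := by positivity
    rw [hα]
    linarith
  have hn0 : (0 : ℝ) < (n : ℝ) := by positivity
  have hn1 : (1 : ℝ) ≤ (n : ℝ) := by exact_mod_cast (by omega : 1 ≤ n)
  have hlb : 0 ≤ Real.logb σ n := Real.logb_nonneg hσ1 hn1
  have hk1 : (1 : ℝ) ≤ (k : ℝ) := by exact_mod_cast hk
  set β : ℝ := α * (Real.logb σ n + k) with hβ
  have hβ0 : 0 ≤ β := by positivity
  set B : ℕ := ⌈β⌉₊ with hB
  have hβB : β ≤ (B : ℝ) := Nat.le_ceil β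
  have hBβ : (B : ℝ) < β + 1 := Nat.ceil_lt_add_one hβ0
  have hB6k : 6 * k ≤ B := by
    have h1 : ((6 * k : ℕ) : ℝ) ≤ (B : ℝ) := by push_cast; nlinarith
    exact_mod_cast h1
  have hB1 : 1 ≤ B := by omega
  have hlogn : 0 ≤ Real.log n := Real.log_nonneg hn1
  -- key log inequality
  have hmulL : 2 * Real.log n + k * Real.log (64 * σ) ≤ B * L := by
    have hlbn : Real.log σ * Real.logb σ n = Real.log n := by
      rw [Real.logb]; field_simp
    have hβL : β * L = 6 * (Real.logb σ n + k) * L + c * (Real.logb σ n + k) := by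
      rw [hβ, hα]; field_simp
    have h1 : 2 * Real.log n + k * Real.log (64 * σ) ≤ c * (Real.logb σ n + k) := by
      rw [hc]; nlinarith [hlbn, hlb, hk1, hlogσ, hlog64σ, hlogn]
    have h2 : β * L ≤ B * L := mul_le_mul_of_nonneg_right hβB hL0.le
    nlinarith [mul_nonneg (mul_nonneg (by norm_num : (0:ℝ) ≤ 6)
      (by positivity : (0:ℝ) ≤ Real.logb σ n + k)) hL0.le]
  have hkey : (n : ℝ) ^ 2 * ((64 * σ : ℕ) : ℝ) ^ k * (3 / 4 : ℝ) ^ B ≤ 1 := by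
    have hb64 : (0 : ℝ) < ((64 * σ : ℕ) : ℝ) := by positivity
    have e1 : (n : ℝ) ^ 2 = Real.exp (2 * Real.log n) := by
      rw [← Real.exp_log (show (0:ℝ) < (n:ℝ)^2 by positivity), Real.log_pow]
      norm_num
    have e2 : ((64 * σ : ℕ) : ℝ) ^ k = Real.exp (k * Real.log (64 * σ)) := by
      rw [← Real.exp_log (show (0:ℝ) < ((64 * σ : ℕ):ℝ)^k by positivity), Real.log_pow]
      push_cast
      norm_num
    have e3 : (3 / 4 : ℝ) ^ B = Real.exp (B * Real.log (3 / 4)) := by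
      rw [← Real.exp_log (show (0:ℝ) < (3/4:ℝ)^B by positivity), Real.log_pow]
    have e4 : Real.log (3 / 4 : ℝ) = -L := by
      rw [hL, ← Real.log_inv]; norm_num
    rw [e1, e2, e3, e4, ← Real.exp_add, ← Real.exp_add]
    calc Real.exp (2 * Real.log n + k * Real.log (64 * σ) + B * (-L))
        ≤ Real.exp 0 := Real.exp_le_exp.2 (by linarith)
      _ = 1 := Real.exp_zero
  -- swap sum
  have hswap : (∑ x : Fin n → Fin σ, maxLcpK n σ k x)
      = ∑ m ∈ Finset.Icc 1 n, (Finset.univ.filter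
          (fun x : Fin n → Fin σ => m ≤ maxLcpK n σ k x)).card := by
    have h1 : ∀ x : Fin n → Fin σ, maxLcpK n σ k x
        = ∑ m ∈ Finset.Icc 1 n, if m ≤ maxLcpK n σ k x then 1 else 0 := by
      intro x
      rw [← Finset.card_filter]
      have hle := maxLcpK_le_n (k := k) x
      have hfil : (Finset.Icc 1 n).filter (fun m => m ≤ maxLcpK n σ k x)
          = Finset.Icc 1 (maxLcpK n σ k x) := by
        ext m
        simp only [Finset.mem_filter, Finset.mem_Icc]
        omega
      rw [hfil, Nat.card_Icc]
      omega
    calc (∑ x : Fin n → Fin σ, maxLcpK n σ k x)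
        = ∑ x : Fin n → Fin σ, ∑ m ∈ Finset.Icc 1 n,
            if m ≤ maxLcpK n σ k x then 1 else 0 :=
          Finset.sum_congr rfl (fun x _ => h1 x)
      _ = ∑ m ∈ Finset.Icc 1 n, ∑ x : Fin n → Fin σ,
            if m ≤ maxLcpK n σ k x then 1 else 0 := Finset.sum_comm
      _ = _ := Finset.sum_congr rfl (fun m _ => (Finset.card_filter _ _).symm)
  have hcard : (Fintype.card (Fin n → Fin σ) : ℝ) = (σ : ℝ) ^ n := by
    rw [Fintype.card_fun, Fintype.card_fin, Fintype.card_fin]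
    push_cast
    rfl
  have hσn : (0 : ℝ) < (σ : ℝ) ^ n := by positivity
  have hE : (∑ x : Fin n → Fin σ, (maxLcpK n σ k x : ℝ))
        / (Fintype.card (Fin n → Fin σ) : ℝ)
      = ∑ m ∈ Finset.Icc 1 n, ((Finset.univ.filter
          (fun x : Fin n → Fin σ => m ≤ maxLcpK n σ k x)).card : ℝ) / (σ : ℝ) ^ n := by
    rw [hcard, ← Finset.sum_div]
    congr 1
    rw [← Nat.cast_sum, hswap]
    push_cast
    rfl
  rw [hE, ← Finset.sum_filter_add_sum_filter_not (Finset.Icc 1 n) (fun m => m < B)]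
  -- first part
  have hS1 : ∑ m ∈ (Finset.Icc 1 n).filter (fun m => m < B),
      ((Finset.univ.filter (fun x : Fin n → Fin σ => m ≤ maxLcpK n σ k x)).card : ℝ)
        / (σ : ℝ) ^ n ≤ β := by
    have hterm : ∀ m ∈ (Finset.Icc 1 n).filter (fun m => m < B),
        ((Finset.univ.filter (fun x : Fin n → Fin σ => m ≤ maxLcpK n σ k x)).card : ℝ)
          / (σ : ℝ) ^ n ≤ 1 := by
      intro m _
      rw [div_le_one hσn]
      calc ((Finset.univ.filter (fun x : Fin n → Fin σ => m ≤ maxLcpK n σ k x)).card : ℝ)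
          ≤ ((Finset.univ : Finset (Fin n → Fin σ)).card : ℝ) := by
            exact_mod_cast Finset.card_filter_le _ _
        _ = (σ : ℝ) ^ n := by rw [← Finset.card_univ] at *; exact_mod_cast hcard
    have hcard1 : ((Finset.Icc 1 n).filter (fun m => m < B)).card ≤ B - 1 := by
      have hsub : (Finset.Icc 1 n).filter (fun m => m < B) ⊆ Finset.Icc 1 (B - 1) := by
        intro m hm
        simp only [Finset.mem_filter, Finset.mem_Icc] at hm ⊢
        omega
      calc _ ≤ (Finset.Icc 1 (B - 1)).card := Finset.card_le_card hsub
        _ = B - 1 := by rw [Nat.card_Icc]; omega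
    calc _ ≤ (((Finset.Icc 1 n).filter (fun m => m < B)).card : ℝ) * 1 := by
          simpa using Finset.sum_le_card_nsmul _ _ 1 hterm
      _ ≤ ((B - 1 : ℕ) : ℝ) * 1 := by gcongr <;> exact_mod_cast hcard1
      _ ≤ β := by
          rw [mul_one, Nat.cast_sub hB1]
          push_cast
          linarith
  -- second part
  have hS2 : ∑ m ∈ (Finset.Icc 1 n).filter (fun m => ¬ m < B),
      ((Finset.univ.filter (fun x : Fin n → Fin σ => m ≤ maxLcpK n σ k x)).card : ℝ)
        / (σ : ℝ) ^ n ≤ 4 := by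
    have hterm : ∀ m ∈ (Finset.Icc 1 n).filter (fun m => ¬ m < B),
        ((Finset.univ.filter (fun x : Fin n → Fin σ => m ≤ maxLcpK n σ k x)).card : ℝ)
          / (σ : ℝ) ^ n ≤ (n : ℝ) ^ 2 * ((64 * σ : ℕ) : ℝ) ^ k * (3 / 4 : ℝ) ^ m := by
      intro m hm
      simp only [Finset.mem_filter, Finset.mem_Icc, not_lt] at hm
      obtain ⟨⟨hm1, hmn⟩, hBm⟩ := hm
      exact per_term n σ k m hσ hk hm1 hmn (le_trans hB6k hBm)
    calc _ ≤ ∑ m ∈ (Finset.Icc 1 n).filter (fun m => ¬ m < B),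
          (n : ℝ) ^ 2 * ((64 * σ : ℕ) : ℝ) ^ k * (3 / 4 : ℝ) ^ m :=
        Finset.sum_le_sum hterm
      _ ≤ ∑ m ∈ Finset.Icc B n,
          (n : ℝ) ^ 2 * ((64 * σ : ℕ) : ℝ) ^ k * (3 / 4 : ℝ) ^ m := by
        apply Finset.sum_le_sum_of_subset_of_nonneg
        · intro m hm
          simp only [Finset.mem_filter, Finset.mem_Icc, not_lt] at hm
          exact Finset.mem_Icc.2 ⟨hm.2, hm.1.2⟩
        · intro m _ _
          positivity
      _ = (n : ℝ) ^ 2 * ((64 * σ : ℕ) : ℝ) ^ k * ∑ m ∈ Finset.Icc B n, (3 / 4 : ℝ) ^ m := by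
        rw [Finset.mul_sum]
      _ ≤ (n : ℝ) ^ 2 * ((64 * σ : ℕ) : ℝ) ^ k * (4 * (3 / 4 : ℝ) ^ B) := by
        gcongr
        exact geom_tail B n
      _ = 4 * ((n : ℝ) ^ 2 * ((64 * σ : ℕ) : ℝ) ^ k * (3 / 4 : ℝ) ^ B) := by ring
      _ ≤ 4 * 1 := by gcongr
      _ = 4 := by norm_num
  linarith
end
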